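/- In a simple disjunctive loop using only multiplication (no addition), i.e., a finite set S of n-tuples of monic monomials in x₁,…,xₙ, the composition closure ⋃_{i≥0} S^{(i)} (with S^{(0)} = {Id} and S^{(i+1)} = S^{(i)} ∪ S ∘ S^{(i)}) is finite if and only if there is a polynomial bound B(x, t) on all values computable by t-step executions of the loop from state x. In particular, if all variables are polynomially bounded then the exponents occurring in the closure are bounded and the closure is a finite set. -/

import Mathlib

open MvPolynomial

/-- A polynomial transition: an `n`-tuple of polynomials over ℕ. -/
abbrev MPn (n : ℕ) := Fin n → MvPolynomial (Fin n) ℕ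

/-- Apply a polynomial transition to a state. -/
noncomputable def applyMP {n : ℕ} (f : MPn n) (x : Fin n → ℕ) : Fin n → ℕ :=
  fun i => eval x (f i)

/-- Run an execution (a finite list of transitions) from an initial state. -/
noncomputable def runL {n : ℕ} (σ : List (MPn n)) (x : Fin n → ℕ) : Fin n → ℕ :=
  σ.foldl (fun s f => applyMP f s) x

/-- A tuple of monic monomials: every component is a monomial with coefficient 1. -/
def isMonicMonTuple {n : ℕ} (f : MPn n) : Prop :=
  ∀ i, ∃ m : Fin n →₀ ℕ, f i = monomial m 1

/-- The composition closure: `S^{(0)} = {Id}`,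
`S^{(k+1)} = S^{(k)} ∪ S ∘ S^{(k)}`. -/
def closSet {n : ℕ} (S : Set (MPn n)) : ℕ → Set (MPn n)
  | 0 => {fun i => X i}
  | k + 1 => closSet S k ∪
      {h | ∃ f ∈ S, ∃ g ∈ closSet S k, h = fun i => bind₁ g (f i)}

/-- Evaluation commutes with `bind₁` (composition of substitutions). -/
lemma myEval_bind₁ {n : ℕ} (x : Fin n → ℕ) (g : Fin n → MvPolynomial (Fin n) ℕ)
    (p : MvPolynomial (Fin n) ℕ) :
    eval x (bind₁ g p) = eval (fun i => eval x (g i)) p := by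
  rw [show (fun i => eval x (g i)) = eval x ∘ g from rfl, eval_assoc]
  congr 1

lemma myApplyMP_bind {n : ℕ} (f g : MPn n) (x : Fin n → ℕ) :
    applyMP (fun i => bind₁ g (f i)) x = applyMP f (applyMP g x) := by
  funext i
  exact myEval_bind₁ x g (f i)

lemma myRunL_append {n : ℕ} (σ : List (MPn n)) (f : MPn n) (x : Fin n → ℕ) :
    runL (σ ++ [f]) x = applyMP f (runL σ x) := by
  simp [runL, List.foldl_append]

/-- Evaluation over ℕ is monotone in the point. -/
lemma myEval_mono {m : ℕ} (p : MvPolynomial (Fin m) ℕ) {x y : Fin m → ℕ}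
    (h : ∀ i, x i ≤ y i) : eval x p ≤ eval y p := by
  rw [eval_eq, eval_eq]
  refine Finset.sum_le_sum fun d _ => ?_
  refine Nat.mul_le_mul_left _ (Finset.prod_le_prod' fun i _ => ?_)
  exact Nat.pow_le_pow_left (h i) _

/-- Evaluation at a constant point is at most (sum of coeffs) * M^(total degree). -/
lemma myEval_const_le {m : ℕ} (p : MvPolynomial (Fin m) ℕ) {M : ℕ} (hM : 1 ≤ M) :
    eval (fun _ => M) p ≤ (∑ d ∈ p.support, coeff d p) * M ^ p.totalDegree := by
  rw [eval_eq, Finset.sum_mul]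
  refine Finset.sum_le_sum fun d hd => ?_
  refine Nat.mul_le_mul_left _ ?_
  calc ∏ _i ∈ d.support, M ^ d _i = M ^ (d.sum fun _ e => e) := by
        rw [Finsupp.sum, ← Finset.prod_pow_eq_pow_sum]
    _ ≤ M ^ p.totalDegree := Nat.pow_le_pow_right hM (le_totalDegree hd)

lemma myClosSet_mono {n : ℕ} (S : Set (MPn n)) {k l : ℕ} (h : k ≤ l) :
    closSet S k ⊆ closSet S l := by
  induction l with
  | zero => simpa [Nat.le_zero.mp h] using Set.Subset.rfl
  | succ l ih =>
    rcases Nat.le_succ_iff.mp (by omega : k ≤ l + 1) with h' | h'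
    · exact (ih h').trans (Set.subset_union_left)
    · exact h' ▸ Set.Subset.rfl

/-- Every element of the closure is realized by an execution. -/
lemma myClosSet_realize {n : ℕ} (S : Set (MPn n)) {k : ℕ} {g : MPn n}
    (hg : g ∈ closSet S k) :
    ∃ σ : List (MPn n), (∀ f ∈ σ, f ∈ S) ∧ ∀ x, runL σ x = applyMP g x := by
  induction k generalizing g with
  | zero =>
    refine ⟨[], by simp, fun x => ?_⟩
    have : g = fun i => X i := hg
    funext i
    simp [runL, applyMP, this]
  | succ k ih =>
    rcases hg with hg | ⟨f, hf, g', hg', rfl⟩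
    · exact ih hg
    · obtain ⟨σ, hσ, hrun⟩ := ih hg'
      refine ⟨σ ++ [f], ?_, fun x => ?_⟩
      · intro f' hf'
        rcases List.mem_append.mp hf' with h | h
        · exact hσ f' h
        · simpa using (List.mem_singleton.mp h) ▸ hf
      · rw [myRunL_append, hrun, myApplyMP_bind]

/-- Every execution is realized by an element of the closure. -/
lemma myRealize_closSet {n : ℕ} (S : Set (MPn n)) (σ : List (MPn n))
    (hσ : ∀ f ∈ σ, f ∈ S) :
    ∃ g ∈ closSet S σ.length, ∀ x, runL σ x = applyMP g x := by
  induction σ using List.reverseRecOn with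
  | nil =>
    refine ⟨fun i => X i, rfl, fun x => ?_⟩
    funext i; simp [runL, applyMP]
  | append_singleton σ f ih =>
    obtain ⟨g, hg, hrun⟩ := ih fun f' hf' => hσ f' (List.mem_append.mpr (Or.inl hf'))
    refine ⟨fun i => bind₁ g (f i), ?_, fun x => ?_⟩
    · simp only [List.length_append, List.length_singleton]
      exact Or.inr ⟨f, hσ f (by simp), g, hg, rfl⟩
    · rw [myRunL_append, hrun, myApplyMP_bind]

lemma myIsMM_prod {n : ℕ} {ι : Type*} (s : Finset ι) (F : ι → MvPolynomial (Fin n) ℕ)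
    (h : ∀ i ∈ s, ∃ m : Fin n →₀ ℕ, F i = monomial m 1) :
    ∃ m : Fin n →₀ ℕ, ∏ i ∈ s, F i = monomial m 1 := by
  classical
  induction s using Finset.induction_on with
  | empty => exact ⟨0, by simp [monomial_zero']⟩
  | @insert a s hx ih =>
    obtain ⟨m, hm⟩ := h a (Finset.mem_insert_self a s)
    obtain ⟨m', hm'⟩ := ih fun i hi => h i (Finset.mem_insert_of_mem hi)
    exact ⟨m + m', by rw [Finset.prod_insert hx, hm, hm', monomial_mul, one_mul]⟩

/-- Every element of the closure is a tuple of monic monomials. -/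
lemma myClosSet_monic {n : ℕ} (S : Set (MPn n)) (hmon : ∀ f ∈ S, isMonicMonTuple f)
    {k : ℕ} {g : MPn n} (hg : g ∈ closSet S k) : isMonicMonTuple g := by
  induction k generalizing g with
  | zero =>
    have : g = fun i => X i := hg
    intro i
    refine ⟨Finsupp.single i 1, ?_⟩
    rw [this]
    rw [show ((fun i => X i : MPn n) i) = X i ^ 1 from (pow_one _).symm,
      X_pow_eq_monomial]
  | succ k ih =>
    rcases hg with hg | ⟨f, hf, g', hg', rfl⟩
    · exact ih hg
    · intro i
      obtain ⟨d, hd⟩ := hmon f hf i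
      have hg'm := ih hg'
      obtain ⟨m, hm⟩ := myIsMM_prod d.support (fun j => g' j ^ d j)
        (fun j _ => by
          obtain ⟨mj, hmj⟩ := hg'm j
          exact ⟨d j • mj, by simp [hmj, monomial_pow]⟩)
      refine ⟨m, ?_⟩
      simp only [hd, bind₁_monomial, map_one, one_mul, hm]

theorem stmt18 {n : ℕ} (S : Set (MPn n)) (hfin : S.Finite)
    (hmon : ∀ f ∈ S, isMonicMonTuple f) :
    (⋃ k, closSet S k).Finite ↔
      ∃ B : MvPolynomial (Fin 2) ℕ, ∀ σ : List (MPn n), (∀ f ∈ σ, f ∈ S) →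
        ∀ x : Fin n → ℕ, (∀ i, 2 ≤ x i) →
          ∀ i, runL σ x i ≤ eval ![Finset.univ.sup x, σ.length] B := by
  classical
  constructor
  · -- finite closure → polynomial bound
    intro hU
    set T := hU.toFinset with hT
    set D : ℕ := T.sup fun g => Finset.univ.sup fun i => (g i).totalDegree with hD
    set Cc : ℕ := T.sup fun g => Finset.univ.sup fun i => ∑ d ∈ (g i).support, coeff d (g i)
      with hCc
    refine ⟨(C Cc) * X 0 ^ D, fun σ hσ x hx i => ?_⟩
    obtain ⟨g, hg, hrun⟩ := myRealize_closSet S σ hσ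
    have hgT : g ∈ T := by
      rw [hT, Set.Finite.mem_toFinset]
      exact Set.mem_iUnion.mpr ⟨σ.length, hg⟩
    set M : ℕ := Finset.univ.sup x with hM
    have hM1 : 1 ≤ M := le_trans one_le_two ((hx i).trans (Finset.le_sup (Finset.mem_univ i)))
    have h1 : runL σ x i ≤ eval (fun _ => M) (g i) := by
      rw [hrun]
      exact myEval_mono (g i) fun j => Finset.le_sup (Finset.mem_univ j)
    have h2 : eval (fun _ => M) (g i) ≤
        (∑ d ∈ (g i).support, coeff d (g i)) * M ^ (g i).totalDegree :=
      myEval_const_le (g i) hM1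
    have h3 : (∑ d ∈ (g i).support, coeff d (g i)) ≤ Cc := by
      calc (∑ d ∈ (g i).support, coeff d (g i))
          ≤ Finset.univ.sup fun i => ∑ d ∈ (g i).support, coeff d (g i) :=
            Finset.le_sup (f := fun i => ∑ d ∈ (g i).support, coeff d (g i))
              (Finset.mem_univ i)
        _ ≤ Cc := by
            rw [hCc]
            exact Finset.le_sup
              (f := fun g => Finset.univ.sup fun i => ∑ d ∈ (g i).support, coeff d (g i)) hgT
    have h4 : (g i).totalDegree ≤ D := by
      calc (g i).totalDegree ≤ Finset.univ.sup fun i => (g i).totalDegree :=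
            Finset.le_sup (f := fun i => (g i).totalDegree) (Finset.mem_univ i)
        _ ≤ D := by
            rw [hD]
            exact Finset.le_sup (f := fun g => Finset.univ.sup fun i => (g i).totalDegree) hgT
    have : eval ![M, σ.length] ((C Cc) * X 0 ^ D) = Cc * M ^ D := by
      simp [eval_mul, eval_pow]
    rw [this]
    calc runL σ x i ≤ (∑ d ∈ (g i).support, coeff d (g i)) * M ^ (g i).totalDegree :=
          h1.trans h2
      _ ≤ Cc * M ^ D := Nat.mul_le_mul h3 (Nat.pow_le_pow_right hM1 h4)
  · -- polynomial bound → finite closure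
    rintro ⟨B, hB⟩
    set D : ℕ := B.totalDegree with hD
    set Cc : ℕ := ∑ d ∈ B.support, coeff d B with hCc
    -- every exponent occurring in the closure is ≤ D
    have key : ∀ g ∈ ⋃ k, closSet S k, ∀ i, ∃ m : Fin n →₀ ℕ,
        g i = monomial m 1 ∧ ∀ j, m j ≤ D := by
      intro g hg i
      obtain ⟨k, hgk⟩ := Set.mem_iUnion.mp hg
      obtain ⟨m, hm⟩ := myClosSet_monic S hmon hgk i
      refine ⟨m, hm, fun j₀ => ?_⟩
      by_contra hcon
      push_neg at hcon
      obtain ⟨σ, hσ, hrun⟩ := myClosSet_realize S hgk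
      set t : ℕ := σ.length with ht
      set M : ℕ := Cc + t + 2 with hMdef
      set x : Fin n → ℕ := fun j => if j = j₀ then M else 2 with hx
      have hx2 : ∀ j, 2 ≤ x j := by
        intro j; rw [hx]; dsimp only; split <;> omega
      have hxle : ∀ j, x j ≤ M := by
        intro j; rw [hx]; dsimp only; split <;> omega
      -- lower bound : M ^ (m j₀) ≤ runL σ x i
      have hlow : M ^ (m j₀) ≤ runL σ x i := by
        rw [hrun]
        show M ^ (m j₀) ≤ eval x (g i)
        rw [hm, eval_monomial, one_mul, Finsupp.prod]
        have hj₀ : j₀ ∈ m.support := Finsupp.mem_support_iff.mpr (by omega)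
        have : x j₀ ^ m j₀ ≤ ∏ j ∈ m.support, x j ^ m j :=
          Finset.single_le_prod' (fun j _ => Nat.one_le_pow _ _ (by have := hx2 j; omega)) hj₀
        simpa [hx] using this
      -- upper bound
      have hsup : Finset.univ.sup x = M := by
        apply le_antisymm
        · exact Finset.sup_le fun j _ => hxle j
        · exact le_trans (by rw [hx]; simp) (Finset.le_sup (Finset.mem_univ j₀))
      have hup : runL σ x i ≤ Cc * M ^ D := by
        have h1 := hB σ hσ x hx2 i
        rw [hsup] at h1
        have h2 : eval ![M, t] B ≤ eval (fun _ => M) B := by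
          refine myEval_mono B fun j => ?_
          fin_cases j <;> simp [hMdef] <;> omega
        have h3 : eval (fun _ => M) B ≤ Cc * M ^ D := myEval_const_le B (by omega)
        exact h1.trans (h2.trans h3)
      -- contradiction
      have hDe : D + 1 ≤ m j₀ := by omega
      have hMe : M ^ (D + 1) ≤ M ^ (m j₀) := Nat.pow_le_pow_right (by omega) hDe
      have : M * M ^ D ≤ Cc * M ^ D := by
        calc M * M ^ D = M ^ (D + 1) := by ring
          _ ≤ M ^ (m j₀) := hMe
          _ ≤ runL σ x i := hlow
          _ ≤ Cc * M ^ D := hup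
      have hMle : M ≤ Cc := Nat.le_of_mul_le_mul_right this (pow_pos (by omega) D)
      omega
    -- finiteness
    -- the closure is contained in a finite set of monomial tuples
    have hsub : (⋃ k, closSet S k) ⊆
        Set.univ.pi (fun _ : Fin n =>
          {p : MvPolynomial (Fin n) ℕ | ∃ m : Fin n →₀ ℕ, p = monomial m 1 ∧ ∀ j, m j ≤ D}) := by
      intro g hg i _
      obtain ⟨m, hm, hmle⟩ := key g hg i
      exact ⟨m, hm, hmle⟩
    refine Set.Finite.subset (Set.Finite.pi fun i => ?_) hsub
    -- each component set is finite
    have : {p : MvPolynomial (Fin n) ℕ | ∃ m : Fin n →₀ ℕ, p = monomial m 1 ∧ ∀ j, m j ≤ D}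
        ⊆ (fun m : Fin n →₀ ℕ => (monomial m 1 : MvPolynomial (Fin n) ℕ)) ''
          {m : Fin n →₀ ℕ | ∀ j, m j ≤ D} := by
      rintro p ⟨m, rfl, hmle⟩
      exact ⟨m, hmle, rfl⟩
    refine Set.Finite.subset (Set.Finite.image _ ?_) this
    have hinj : Set.InjOn (fun m : Fin n →₀ ℕ => (m : Fin n → ℕ))
        {m : Fin n →₀ ℕ | ∀ j, m j ≤ D} :=
      fun a _ b _ h => DFunLike.coe_injective h
    have himg : ((fun m : Fin n →₀ ℕ => (m : Fin n → ℕ)) ''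
        {m : Fin n →₀ ℕ | ∀ j, m j ≤ D}).Finite := by
      refine Set.Finite.subset (Set.Finite.pi fun _ : Fin n => Set.finite_Iic D) ?_
      rintro f ⟨m, hmle, rfl⟩
      exact fun j _ => hmle j
    exact (Set.Finite.of_finite_image himg hinj)
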